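/- Suppose F(x) and G(x) are formal power series over ℚ with constant term 1 satisfying G(x)/F(x) = ∏_{n ≥ 0} F(x^{p^n})^{a p^{bn}} for integers a, b and a prime p. Writing log F(x) = ∑ f^n x^n/n and log G(x) = ∑ g^n x^n/n, one has g^n = f^n + a ∑_{k=0}^{ν_p(n)} p^{k(b+1)} f^{n/p^k} for all n ≥ 1. -/

import Mathlib

open PowerSeries

/-- The formal logarithm `log f = ∑ₖ (-1)^(k+1) (f-1)^k / k` of a power series `f` (with constant term `1`). -/
noncomputable def logPS (f : PowerSeries ℚ) : PowerSeries ℚ :=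
  PowerSeries.mk fun n =>
    ∑ k ∈ Finset.range (n + 1), (-1 : ℚ) ^ (k + 1) * (PowerSeries.coeff n ((f - 1) ^ k)) / k

/-- The series `∑_{n ≥ 1} a n * x^n / n`. -/
noncomputable def serA (a : ℕ → ℚ) : PowerSeries ℚ :=
  PowerSeries.mk fun n => if n = 0 then 0 else a n / n

/-- The `(x)`-adic limit of the partial products `∏_{n ≤ N} f n`: this is the infinite product `∏_{n ≥ 0} f n` whenever the factor `f n` is `≡ 1 mod x^n`. -/
noncomputable def prodPS (f : ℕ → PowerSeries ℚ) : PowerSeries ℚ :=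
  PowerSeries.mk fun N => PowerSeries.coeff N (∏ n ∈ Finset.range (N + 1), f n)

/-- Integer powers of a formal power series (negative powers use the formal inverse available over the field `ℚ`). -/
noncomputable def zpowPS (f : PowerSeries ℚ) (m : ℤ) : PowerSeries ℚ :=
  if 0 ≤ m then f ^ m.toNat else (f⁻¹) ^ (-m).toNat

/-- The substitution `x ↦ x^p` in a formal power series. -/
noncomputable def powSubst (f : PowerSeries ℚ) (p : ℕ) : PowerSeries ℚ :=
  PowerSeries.mk fun n => if p ∣ n then PowerSeries.coeff (n / p) f else 0

open Finset

noncomputable def truncLogAux (f : PowerSeries ℚ) (N : ℕ) : PowerSeries ℚ :=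
  ∑ k ∈ range (N+1), ((-1:ℚ)^(k+1) / k) • (f - 1)^k

lemma coeff_logPS (f : PowerSeries ℚ) (n : ℕ) :
    coeff n (logPS f) = ∑ k ∈ range (n+1), (-1:ℚ)^(k+1) * coeff n ((f-1)^k) / k := by
  simp [logPS]

lemma coeff_pow_eq_zero {u : PowerSeries ℚ} (hu : constantCoeff u = 0)
    {m k : ℕ} (h : m < k) : coeff m (u ^ k) = 0 := by
  have : (X : PowerSeries ℚ) ^ k ∣ u ^ k := pow_dvd_pow_of_dvd (X_dvd_iff.mpr hu) k
  exact X_pow_dvd_iff.mp this m h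

lemma cc_sub_one {f : PowerSeries ℚ} (hf : constantCoeff f = 1) :
    constantCoeff (f - 1) = 0 := by simp [hf]

lemma coeff_logPS_of_le {f : PowerSeries ℚ} (hf : constantCoeff f = 1) {n N : ℕ} (h : n ≤ N) :
    coeff n (logPS f) = ∑ k ∈ range (N+1), (-1:ℚ)^(k+1) * coeff n ((f-1)^k) / k := by
  rw [coeff_logPS]
  apply Finset.sum_subset (by intro k hk; simp at hk ⊢; omega)
  intro k hk hk'
  simp only [mem_range] at hk hk'
  rw [coeff_pow_eq_zero (cc_sub_one hf) (by omega)]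
  simp

lemma constantCoeff_logPS (f : PowerSeries ℚ) : constantCoeff (logPS f) = 0 := by
  rw [← coeff_zero_eq_constantCoeff_apply, coeff_logPS]
  simp

lemma logPS_one : logPS 1 = 0 := by
  ext n
  rw [coeff_logPS]
  simp only [sub_self, map_zero]
  apply Finset.sum_eq_zero
  intro k hk
  match k with
  | 0 => simp
  | k+1 => simp [zero_pow]

lemma derivative_truncLogAux (f : PowerSeries ℚ) (N : ℕ) :
    d⁄dX ℚ (truncLogAux f (N+1)) = (∑ j ∈ range (N+1), (-(f-1))^j) * d⁄dX ℚ f := by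
  unfold truncLogAux
  rw [map_sum, Finset.sum_range_succ']
  have hDu : d⁄dX ℚ (f - 1) = d⁄dX ℚ f := by
    rw [map_sub]; simp
  simp only [Derivation.map_smul, Derivation.leibniz_pow, hDu]
  simp only [pow_zero, Nat.cast_zero, zero_smul, smul_zero, add_zero]
  rw [Finset.sum_mul]
  apply Finset.sum_congr rfl
  intro j hj
  have h1 : ((-1:ℚ)^(j+1+1) / (j+1 : ℕ)) • ((j+1 : ℕ) • ((f-1)^(j+1-1) • d⁄dX ℚ f))
      = (-(f-1))^j * d⁄dX ℚ f := by
    rw [← Nat.cast_smul_eq_nsmul ℚ, smul_smul]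
    have h2 : (-1:ℚ)^(j+1+1) / (j+1 : ℕ) * (j+1 : ℕ) = (-1:ℚ)^j := by
      have : ((j:ℚ)+1) ≠ 0 := by positivity
      push_cast
      field_simp
      ring
    rw [h2, smul_eq_mul, smul_eq_C_mul, map_pow, map_neg, map_one, Nat.add_sub_cancel,
      neg_pow (f-1) j]
    ring
  exact h1

lemma X_pow_dvd_logPS_sub_truncLogAux {f : PowerSeries ℚ} (hf : constantCoeff f = 1) (N : ℕ) :
    (X : PowerSeries ℚ)^(N+1) ∣ (logPS f - truncLogAux f N) := by
  rw [X_pow_dvd_iff]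
  intro m hm
  rw [map_sub, coeff_logPS_of_le hf (Nat.lt_succ_iff.mp hm), truncLogAux, map_sum,
    ← Finset.sum_sub_distrib]
  apply Finset.sum_eq_zero
  intro k hk
  rw [coeff_smul]
  simp only [smul_eq_mul]
  ring

lemma mul_derivative_logPS {f : PowerSeries ℚ} (hf : constantCoeff f = 1) :
    f * d⁄dX ℚ (logPS f) = d⁄dX ℚ f := by
  ext n
  obtain ⟨s, hs⟩ := X_pow_dvd_logPS_sub_truncLogAux hf (n+1)
  have hDX : d⁄dX ℚ ((X:PowerSeries ℚ)^(n+2)) = ((n+2 : ℕ) : PowerSeries ℚ) * X^(n+1) := by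
    rw [Derivation.leibniz_pow, derivative_X, smul_eq_mul, mul_one, nsmul_eq_mul]
    norm_num
  have hD : (X : PowerSeries ℚ)^(n+1) ∣ d⁄dX ℚ (logPS f) - d⁄dX ℚ (truncLogAux f (n+1)) := by
    rw [← map_sub, hs, Derivation.leibniz, smul_eq_mul, smul_eq_mul, hDX]
    apply dvd_add
    · exact dvd_mul_of_dvd_left (pow_dvd_pow X (by omega)) _
    · exact Dvd.intro_left _ rfl |>.mul_left s
  have key : (X : PowerSeries ℚ)^(n+1) ∣ f * d⁄dX ℚ (logPS f) - d⁄dX ℚ f := by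
    have h2 : f * d⁄dX ℚ (truncLogAux f (n+1)) - d⁄dX ℚ f = -((-(f-1))^(n+1) * d⁄dX ℚ f) := by
      rw [derivative_truncLogAux]
      have geo : f * (∑ j ∈ range (n+1), (-(f-1))^j) = 1 - (-(f-1))^(n+1) := by
        calc f * (∑ j ∈ range (n+1), (-(f-1))^j)
            = (1 - -(f-1)) * ∑ j ∈ range (n+1), (-(f-1))^j := by ring_nf
          _ = 1 - (-(f-1))^(n+1) := mul_neg_geom_sum _ _
      rw [← mul_assoc, geo]
      ring
    have hdvd2 : (X : PowerSeries ℚ)^(n+1) ∣ f * d⁄dX ℚ (truncLogAux f (n+1)) - d⁄dX ℚ f := by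
      rw [h2]
      rw [dvd_neg]
      apply Dvd.dvd.mul_right
      calc (X : PowerSeries ℚ)^(n+1) ∣ (f-1)^(n+1) :=
            pow_dvd_pow_of_dvd (X_dvd_iff.mpr (cc_sub_one hf)) _
        _ ∣ (-(f-1))^(n+1) := by rw [neg_pow]; exact Dvd.intro_left _ rfl
    have hsplit : f * d⁄dX ℚ (logPS f) - d⁄dX ℚ f
        = f * (d⁄dX ℚ (logPS f) - d⁄dX ℚ (truncLogAux f (n+1)))
          + (f * d⁄dX ℚ (truncLogAux f (n+1)) - d⁄dX ℚ f) := by ring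
    rw [hsplit]
    exact dvd_add (Dvd.dvd.mul_left hD f) hdvd2
  have hz := X_pow_dvd_iff.mp key n (by omega)
  rw [map_sub, sub_eq_zero] at hz
  exact hz

lemma eq_of_derivative_eq {h1 h2 : PowerSeries ℚ} (hD : d⁄dX ℚ h1 = d⁄dX ℚ h2)
    (hc : constantCoeff h1 = constantCoeff h2) : h1 = h2 := by
  ext n
  match n with
  | 0 => simpa [coeff_zero_eq_constantCoeff] using hc
  | n+1 =>
    have := congrArg (coeff n) hD
    rw [coeff_derivative, coeff_derivative] at this
    have hne : ((n:ℚ)+1) ≠ 0 := by positivity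
    exact mul_right_cancel₀ hne this

lemma logPS_mul {f g : PowerSeries ℚ} (hf : constantCoeff f = 1)
    (hg : constantCoeff g = 1) : logPS (f*g) = logPS f + logPS g := by
  have hfg : constantCoeff (f*g) = 1 := by rw [map_mul, hf, hg, mul_one]
  apply eq_of_derivative_eq
  · have hne : f * g ≠ 0 := fun h => by simp [h] at hfg
    apply mul_left_cancel₀ hne
    rw [mul_derivative_logPS hfg, map_add, Derivation.leibniz, smul_eq_mul, smul_eq_mul]
    calc f • d⁄dX ℚ g + g • d⁄dX ℚ f
        = f * (g * d⁄dX ℚ (logPS g)) + g * (f * d⁄dX ℚ (logPS f)) := by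
          rw [mul_derivative_logPS hf, mul_derivative_logPS hg, smul_eq_mul, smul_eq_mul]
      _ = f * g * (d⁄dX ℚ (logPS f) + d⁄dX ℚ (logPS g)) := by ring
  · rw [constantCoeff_logPS, map_add, constantCoeff_logPS, constantCoeff_logPS]
    norm_num

lemma logPS_inv {f : PowerSeries ℚ} (hf : constantCoeff f = 1) :
    logPS f⁻¹ = - logPS f := by
  have hne : constantCoeff f ≠ 0 := by rw [hf]; norm_num
  have hinv : constantCoeff f⁻¹ = 1 := by rw [constantCoeff_inv, hf]; norm_num
  have h1 : logPS (f * f⁻¹) = logPS f + logPS f⁻¹ := logPS_mul hf hinv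
  rw [PowerSeries.mul_inv_cancel _ hne, logPS_one] at h1
  linear_combination -h1

lemma logPS_pow {f : PowerSeries ℚ} (hf : constantCoeff f = 1) (k : ℕ) :
    logPS (f^k) = (k : ℚ) • logPS f := by
  induction k with
  | zero => simp [logPS_one]
  | succ k ih =>
    have hfk : constantCoeff (f^k) = 1 := by rw [map_pow, hf, one_pow]
    rw [pow_succ, logPS_mul hfk hf, ih]
    push_cast
    module

lemma constantCoeff_zpowPS {f : PowerSeries ℚ} (hf : constantCoeff f = 1) (m : ℤ) :
    constantCoeff (zpowPS f m) = 1 := by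
  unfold zpowPS
  split
  · rw [map_pow, hf, one_pow]
  · rw [map_pow, constantCoeff_inv, hf, inv_one, one_pow]

lemma logPS_zpowPS {f : PowerSeries ℚ} (hf : constantCoeff f = 1) (m : ℤ) :
    logPS (zpowPS f m) = (m : ℚ) • logPS f := by
  unfold zpowPS
  split
  · next h =>
    rw [logPS_pow hf]
    congr 1
    exact_mod_cast congrArg (Int.cast : ℤ → ℚ) (Int.toNat_of_nonneg h)
  · next h =>
    have hinv : constantCoeff f⁻¹ = 1 := by rw [constantCoeff_inv, hf]; norm_num
    rw [logPS_pow hinv, logPS_inv hf, smul_neg]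
    have : ((((-m).toNat : ℕ)) : ℚ) = -(m : ℚ) := by
      have := Int.toNat_of_nonneg (by omega : (0:ℤ) ≤ -m)
      exact_mod_cast congrArg (Int.cast : ℤ → ℚ) this
    rw [this]
    module

lemma coeff_powSubst (f : PowerSeries ℚ) (q n : ℕ) :
    coeff n (powSubst f q) = if q ∣ n then coeff (n/q) f else 0 := by
  simp [powSubst]

lemma sum_div_helper {q : ℕ} (hq : 0 < q) (m : ℕ) (t : ℕ → ℚ) :
    ∑ k ∈ range (q*m+1), (if q ∣ k then t (k/q) else 0) = ∑ i ∈ range (m+1), t i := by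
  rw [← Finset.sum_filter]
  apply Finset.sum_nbij' (fun k => k / q) (fun i => q * i)
  · intro k hk
    simp only [mem_filter, mem_range] at hk ⊢
    obtain ⟨hk1, ⟨c, rfl⟩⟩ := hk
    rw [Nat.mul_div_cancel_left _ hq]
    have : c ≤ m := by nlinarith [Nat.lt_succ_iff.mp hk1]
    omega
  · intro i hi
    simp only [mem_filter, mem_range] at hi ⊢
    exact ⟨by nlinarith [Nat.lt_succ_iff.mp hi], Dvd.intro _ rfl⟩
  · intro k hk
    simp only [mem_filter, mem_range] at hk
    exact Nat.mul_div_cancel' hk.2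
  · intro i hi
    exact Nat.mul_div_cancel_left _ hq
  · intro k hk
    rfl

lemma powSubst_mul (f g : PowerSeries ℚ) {q : ℕ} (hq : 0 < q) :
    powSubst (f * g) q = powSubst f q * powSubst g q := by
  ext n
  rw [coeff_powSubst]
  by_cases h : q ∣ n
  · obtain ⟨m, rfl⟩ := h
    rw [if_pos (Dvd.intro _ rfl), Nat.mul_div_cancel_left _ hq, PowerSeries.coeff_mul,
      PowerSeries.coeff_mul, Finset.Nat.sum_antidiagonal_eq_sum_range_succ_mk,
      Finset.Nat.sum_antidiagonal_eq_sum_range_succ_mk,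
      ← sum_div_helper hq m (fun i => coeff i f * coeff (m - i) g)]
    apply Finset.sum_congr rfl
    intro k hk
    rw [coeff_powSubst, coeff_powSubst]
    by_cases hd : q ∣ k
    · obtain ⟨c, rfl⟩ := hd
      have e1 : q * m - q * c = q * (m - c) := by rw [Nat.mul_sub]
      simp [dvd_mul_right, Nat.mul_div_cancel_left _ hq, e1]
    · rw [if_neg hd, if_neg hd, zero_mul]
  · rw [if_neg h, PowerSeries.coeff_mul, Finset.Nat.sum_antidiagonal_eq_sum_range_succ_mk]
    symm
    apply Finset.sum_eq_zero
    intro k hk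
    simp only [mem_range] at hk
    rw [coeff_powSubst, coeff_powSubst]
    by_cases h1 : q ∣ k
    · have h2 : ¬ q ∣ n - k := by
        intro h2
        apply h
        have h3 := Nat.dvd_add h1 h2
        rwa [Nat.add_sub_cancel' (by omega)] at h3
      rw [if_neg h2, mul_zero]
    · rw [if_neg h1, zero_mul]

lemma powSubst_one {q : ℕ} (hq : 0 < q) : powSubst 1 q = 1 := by
  ext n
  rw [coeff_powSubst]
  by_cases h : q ∣ n
  · rw [if_pos h]
    rcases Nat.eq_zero_or_pos n with rfl | hn
    · simp
    · have h1 : n / q ≠ 0 := by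
        obtain ⟨c, rfl⟩ := h
        rw [Nat.mul_div_cancel_left _ hq]
        rintro rfl; omega
      rw [PowerSeries.coeff_one, PowerSeries.coeff_one, if_neg h1, if_neg (by omega)]
  · rw [if_neg h, PowerSeries.coeff_one, if_neg (by rintro rfl; exact h (dvd_zero q))]

lemma powSubst_pow (f : PowerSeries ℚ) {q : ℕ} (hq : 0 < q) (k : ℕ) :
    powSubst (f^k) q = (powSubst f q)^k := by
  induction k with
  | zero => simpa using powSubst_one hq
  | succ k ih => rw [pow_succ, powSubst_mul _ _ hq, ih, pow_succ]

lemma powSubst_sub_one (f : PowerSeries ℚ) {q : ℕ} (hq : 0 < q) :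
    powSubst (f - 1) q = powSubst f q - 1 := by
  ext n
  rw [map_sub, coeff_powSubst, coeff_powSubst]
  by_cases h : q ∣ n
  · rw [if_pos h, if_pos h, map_sub]
    congr 1
    rcases Nat.eq_zero_or_pos n with rfl | hn
    · simp
    · have h1 : n / q ≠ 0 := by
        obtain ⟨c, rfl⟩ := h
        rw [Nat.mul_div_cancel_left _ hq]
        rintro rfl; omega
      rw [PowerSeries.coeff_one, PowerSeries.coeff_one, if_neg h1, if_neg (by omega)]
  · rw [if_neg h, if_neg h]
    have : coeff n (1 : PowerSeries ℚ) = 0 := by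
      rw [PowerSeries.coeff_one, if_neg (by rintro rfl; exact h (dvd_zero q))]
    rw [this, sub_zero]

lemma constantCoeff_powSubst {f : PowerSeries ℚ} (hf : constantCoeff f = 1) (q : ℕ) :
    constantCoeff (powSubst f q) = 1 := by
  rw [← coeff_zero_eq_constantCoeff_apply, coeff_powSubst, if_pos (dvd_zero q), Nat.zero_div,
    coeff_zero_eq_constantCoeff_apply, hf]

lemma coeff_logPS_powSubst {F : PowerSeries ℚ} (hF : constantCoeff F = 1) {q : ℕ} (hq : 0 < q)
    (n : ℕ) :
    coeff n (logPS (powSubst F q)) = if q ∣ n then coeff (n/q) (logPS F) else 0 := by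
  have hpow : ∀ k : ℕ, (powSubst F q - 1)^k = powSubst ((F-1)^k) q := by
    intro k
    rw [← powSubst_sub_one F hq, ← powSubst_pow _ hq]
  rw [coeff_logPS]
  simp only [hpow, coeff_powSubst]
  by_cases h : q ∣ n
  · simp only [if_pos h]
    rw [coeff_logPS_of_le hF (Nat.div_le_self n q)]
  · simp only [if_neg h]
    apply Finset.sum_eq_zero
    intro k hk
    simp

lemma coeff_logPS_congr {A B : PowerSeries ℚ} {N : ℕ}
    (h : (X : PowerSeries ℚ)^(N+1) ∣ A - B) {m : ℕ} (hm : m ≤ N) :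
    coeff m (logPS A) = coeff m (logPS B) := by
  rw [coeff_logPS, coeff_logPS]
  apply Finset.sum_congr rfl
  intro k hk
  have hd : (X : PowerSeries ℚ)^(N+1) ∣ (A-1)^k - (B-1)^k := by
    refine h.trans ?_
    have := sub_dvd_pow_sub_pow (A-1) (B-1) k
    simpa using this
  have := X_pow_dvd_iff.mp hd m (by omega)
  rw [map_sub, sub_eq_zero] at this
  rw [this]

lemma dvd_prod_sub_one {s : Finset ℕ} {h : ℕ → PowerSeries ℚ} {d : PowerSeries ℚ}
    (hh : ∀ k ∈ s, d ∣ h k - 1) : d ∣ (∏ k ∈ s, h k) - 1 := by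
  induction s using Finset.cons_induction with
  | empty => simp
  | cons i s hi ih =>
    rw [Finset.prod_cons]
    have h1 : h i * ∏ k ∈ s, h k - 1
        = (h i - 1) * ∏ k ∈ s, h k + ((∏ k ∈ s, h k) - 1) := by ring
    rw [h1]
    exact dvd_add (Dvd.dvd.mul_right (hh i (Finset.mem_cons_self i s)) _)
      (ih fun k hk => hh k (Finset.mem_cons_of_mem hk))

lemma X_pow_dvd_zpowPS_sub_one {h : PowerSeries ℚ} (hc : constantCoeff h = 1) {N : ℕ}
    (hd : (X : PowerSeries ℚ)^N ∣ h - 1) (m : ℤ) :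
    (X : PowerSeries ℚ)^N ∣ zpowPS h m - 1 := by
  have key : ∀ (u : PowerSeries ℚ), (X : PowerSeries ℚ)^N ∣ u - 1 → ∀ t : ℕ,
      (X : PowerSeries ℚ)^N ∣ u^t - 1 := by
    intro u hu t
    refine hu.trans ?_
    have := sub_dvd_pow_sub_pow u 1 t
    simpa using this
  unfold zpowPS
  split
  · exact key h hd _
  · apply key
    have hne : constantCoeff h ≠ 0 := by rw [hc]; norm_num
    have h1 : h⁻¹ - 1 = h⁻¹ * (1 - h) := by
      rw [mul_sub, mul_one, PowerSeries.inv_mul_cancel _ hne]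
    rw [h1]
    refine Dvd.dvd.mul_left ?_ _
    rw [← neg_sub h 1]
    exact dvd_neg.mpr hd

lemma logPS_prod {s : Finset ℕ} {h : ℕ → PowerSeries ℚ}
    (hh : ∀ k ∈ s, constantCoeff (h k) = 1) :
    logPS (∏ k ∈ s, h k) = ∑ k ∈ s, logPS (h k) := by
  induction s using Finset.cons_induction with
  | empty => simpa using logPS_one
  | cons i s hi ih =>
    rw [Finset.prod_cons, Finset.sum_cons,
      logPS_mul (hh i (Finset.mem_cons_self i s))
        (by rw [map_prod]; exact Finset.prod_eq_one fun k hk => hh k (Finset.mem_cons_of_mem hk)),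
      ih fun k hk => hh k (Finset.mem_cons_of_mem hk)]

lemma coeff_prodPS {h : ℕ → PowerSeries ℚ} (hh : ∀ k, (X : PowerSeries ℚ)^k ∣ h k - 1)
    {m N : ℕ} (hm : m ≤ N) :
    coeff m (prodPS h) = coeff m (∏ k ∈ range (N+1), h k) := by
  rw [prodPS, coeff_mk, ← Finset.prod_range_mul_prod_Ico h (Nat.add_le_add_right hm 1)]
  have hQ : (X : PowerSeries ℚ)^(m+1) ∣ (∏ k ∈ Ico (m+1) (N+1), h k) - 1 := by
    apply dvd_prod_sub_one
    intro k hk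
    simp only [Finset.mem_Ico] at hk
    exact (pow_dvd_pow X hk.1).trans (hh k)
  obtain ⟨s, hs⟩ := hQ
  have hsplit : (∏ k ∈ range (m+1), h k) * ∏ k ∈ Ico (m+1) (N+1), h k
      = (∏ k ∈ range (m+1), h k) + (∏ k ∈ range (m+1), h k) * ((X:PowerSeries ℚ)^(m+1) * s) := by
    rw [← hs]; ring
  rw [hsplit, map_add]
  have hz : coeff m ((∏ k ∈ range (m+1), h k) * ((X:PowerSeries ℚ)^(m+1) * s)) = 0 := by
    apply X_pow_dvd_iff.mp (Dvd.dvd.mul_left (Dvd.intro _ rfl) _) m (by omega)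
  rw [hz, add_zero]

lemma X_pow_dvd_powSubst_sub_one {F : PowerSeries ℚ} (hF : constantCoeff F = 1) {q : ℕ}
    (hq : 0 < q) : (X : PowerSeries ℚ)^q ∣ powSubst F q - 1 := by
  rw [← powSubst_sub_one F hq, X_pow_dvd_iff]
  intro m hm
  rw [coeff_powSubst]
  split
  · next hd =>
    obtain ⟨c, rfl⟩ := hd
    have hc : c = 0 := by nlinarith
    subst hc
    simp [cc_sub_one hF]
  · rfl


/-- If `G/F = ∏_{n ≥ 0} F(x^(p^n))^(a p^(b n))` and
`log F = ∑ f_n x^n/n`, `log G = ∑ g_n x^n/n`, then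
`g_n = f_n + a ∑_{k=0}^{ν_p(n)} p^(k(b+1)) f_{n/p^k}`. -/
theorem stmt_15 (p : ℕ) (hp : p.Prime) (a b : ℤ) (F G : PowerSeries ℚ)
    (hF : PowerSeries.constantCoeff F = 1)
    (hG : PowerSeries.constantCoeff G = 1)
    (e : ℕ → ℤ) (he : ∀ n : ℕ, (e n : ℚ) = (a : ℚ) * (p : ℚ) ^ (b * (n : ℤ)))
    (hprod : G * F⁻¹ = prodPS fun n => zpowPS (powSubst F (p ^ n)) (e n))
    (f g : ℕ → ℚ) (hf : logPS F = serA f) (hg : logPS G = serA g) :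
    ∀ n : ℕ, 1 ≤ n →
      g n = f n + (a : ℚ) * ∑ k ∈ Finset.range (padicValNat p n + 1),
        (p : ℚ) ^ ((k : ℤ) * (b + 1)) * f (n / p ^ k) := by

  intro n hn
  set hfun : ℕ → PowerSeries ℚ := fun k => zpowPS (powSubst F (p ^ k)) (e k) with hfun_def
  have hFne : constantCoeff F ≠ 0 := by rw [hF]; norm_num
  have hccPk : ∀ k, constantCoeff (powSubst F (p^k)) = 1 := fun k => constantCoeff_powSubst hF _
  have hcch : ∀ k, constantCoeff (hfun k) = 1 := fun k => constantCoeff_zpowPS (hccPk k) _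
  have hdvdk : ∀ k, (X : PowerSeries ℚ)^k ∣ hfun k - 1 := by
    intro k
    refine (pow_dvd_pow X (le_of_lt (Nat.lt_pow_self (n := k) hp.one_lt))).trans ?_
    exact X_pow_dvd_zpowPS_sub_one (hccPk k)
      (X_pow_dvd_powSubst_sub_one hF (pow_pos hp.pos k)) _
  have hccPi : constantCoeff (prodPS hfun) = 1 := by
    rw [← coeff_zero_eq_constantCoeff_apply, coeff_prodPS hdvdk (le_refl 0)]
    simpa using hcch 0
  have hG2 : G = prodPS hfun * F := by
    calc G = G * (F⁻¹ * F) := by rw [PowerSeries.inv_mul_cancel _ hFne, mul_one]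
      _ = (G * F⁻¹) * F := by ring
      _ = prodPS hfun * F := by rw [hprod]
  have hlog : logPS G = logPS (prodPS hfun) + logPS F := by
    rw [hG2]; exact logPS_mul hccPi hF
  have master : g n / n = (∑ k ∈ range (n+1), (e k : ℚ) *
      (if p^k ∣ n then f (n/p^k) / ((n/p^k : ℕ) : ℚ) else 0)) + f n / n := by
    have h1 : coeff n (logPS G) = g n / n := by
      rw [hg]
      have h0 : coeff n (serA g) = if n = 0 then 0 else g n / n := by simp [serA, coeff_mk]
      rw [h0, if_neg (by omega)]
    rw [← h1, hlog, map_add]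
    congr 1
    · have hdvd : (X : PowerSeries ℚ)^(n+1) ∣ prodPS hfun - ∏ k ∈ range (n+1), hfun k := by
        rw [X_pow_dvd_iff]; intro m hm
        rw [map_sub, coeff_prodPS hdvdk (by omega : m ≤ n), sub_self]
      rw [coeff_logPS_congr hdvd (le_refl n), logPS_prod (fun k _ => hcch k), map_sum]
      apply Finset.sum_congr rfl
      intro k hk
      rw [show hfun k = zpowPS (powSubst F (p^k)) (e k) from rfl,
        logPS_zpowPS (hccPk k), coeff_smul, smul_eq_mul,
        coeff_logPS_powSubst hF (pow_pos hp.pos k) n]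
      congr 1
      split
      · next hdk =>
        obtain ⟨c, rfl⟩ := hdk
        have hc : c ≠ 0 := by rintro rfl; omega
        rw [hf, Nat.mul_div_cancel_left _ (pow_pos hp.pos k)]
        simp [serA, coeff_mk, hc]
      · rfl
    · rw [hf]
      have h0 : coeff n (serA f) = if n = 0 then 0 else f n / n := by simp [serA, coeff_mk]
      rw [h0, if_neg (by omega)]
  set ν := padicValNat p n with hν_def
  have hdvd_iff : ∀ k : ℕ, p^k ∣ n ↔ k ≤ ν := by
    intro k
    rw [hν_def, ← Nat.factorization_def n hp]
    exact hp.pow_dvd_iff_le_factorization (by omega)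
  have hν_le : ν ≤ n := by
    have h1 : p^ν ∣ n := (hdvd_iff ν).mpr le_rfl
    have h2 : p^ν ≤ n := Nat.le_of_dvd (by omega) h1
    have h3 : ν < p^ν := Nat.lt_pow_self (n := ν) hp.one_lt
    omega
  have hrestrict : (∑ k ∈ range (n+1), (e k : ℚ) *
      (if p^k ∣ n then f (n/p^k) / ((n/p^k : ℕ) : ℚ) else 0))
      = ∑ k ∈ range (ν+1), (e k : ℚ) * (f (n/p^k) / ((n/p^k : ℕ) : ℚ)) := by
    rw [← Finset.sum_subset (Finset.range_subset_range.mpr (by omega : ν+1 ≤ n+1))]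
    · apply Finset.sum_congr rfl
      intro k hk
      simp only [mem_range] at hk
      rw [if_pos ((hdvd_iff k).mpr (by omega))]
    · intro k hk hk'
      simp only [mem_range] at hk hk'
      rw [if_neg (fun hd => by have := (hdvd_iff k).mp hd; omega), mul_zero]
  rw [hrestrict] at master
  have hnQ : ((n:ℕ) : ℚ) ≠ 0 := by
    simp only [ne_eq, Nat.cast_eq_zero]; omega
  have hgn : g n = (n : ℚ) * (∑ k ∈ range (ν+1), (e k : ℚ) *
      (f (n/p^k) / ((n/p^k : ℕ) : ℚ))) + f n := by
    have := master
    field_simp at this ⊢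
    linarith [this]
  rw [hgn, add_comm, Finset.mul_sum, Finset.mul_sum]
  congr 1
  apply Finset.sum_congr rfl
  intro k hk
  simp only [mem_range] at hk
  have hdk : p^k ∣ n := (hdvd_iff k).mpr (by omega)
  have hj : (n / p^k) * p^k = n := Nat.div_mul_cancel hdk
  have hjne : ((n / p^k : ℕ) : ℚ) ≠ 0 := by
    simp only [ne_eq, Nat.cast_eq_zero]
    intro h0
    rw [h0, zero_mul] at hj
    omega
  have hcast : ((n:ℕ) : ℚ) = ((n / p^k : ℕ) : ℚ) * ((p:ℚ))^k := by
    conv_lhs => rw [← hj]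
    push_cast
    ring
  rw [he k, hcast]
  have hpne : (p : ℚ) ≠ 0 := by
    simp only [ne_eq, Nat.cast_eq_zero]; exact hp.pos.ne'
  have hzpow : (p:ℚ) ^ (b * (k:ℤ)) * (p:ℚ)^(k:ℕ) = (p:ℚ) ^ ((k:ℤ) * (b+1)) := by
    rw [← zpow_natCast (p:ℚ) k, ← zpow_add₀ hpne]
    congr 1
    ring
  field_simp
  rw [← hzpow]
  ring
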